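/- Let A, B ∈ ℝ^{n×n}. Suppose that for every nonzero positive semidefinite symmetric 2n×2n matrix H with blocks H₁₁, H₁₂, H₁₂ᵀ, H₂₂ (each n×n) satisfying diag(H₁₁) = diag(H₂₂), the matrix A H₁₁ + B H₁₂ᵀ has a negative diagonal entry. Then for every nonzero positive semidefinite symmetric 2n×2n matrix H with diag(H₁₁) ≥ diag(H₂₂) (entrywise), the matrix A H₁₁ + B H₁₂ᵀ has a negative diagonal entry. -/

import Mathlib

open Matrix

theorem diag_eq_condition_extends_to_diag_ge {n : ℕ} (A B : Matrix (Fin n) (Fin n) ℝ)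
    (h : ∀ H : Matrix (Fin n ⊕ Fin n) (Fin n ⊕ Fin n) ℝ, H ≠ 0 → H.PosSemidef →
      (∀ i : Fin n, H (Sum.inl i) (Sum.inl i) = H (Sum.inr i) (Sum.inr i)) →
      ∃ i : Fin n, (A * H.toBlocks₁₁ + B * (H.toBlocks₁₂)ᵀ) i i < 0) :
    ∀ H : Matrix (Fin n ⊕ Fin n) (Fin n ⊕ Fin n) ℝ, H ≠ 0 → H.PosSemidef →
      (∀ i : Fin n, H (Sum.inr i) (Sum.inr i) ≤ H (Sum.inl i) (Sum.inl i)) →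
      ∃ i : Fin n, (A * H.toBlocks₁₁ + B * (H.toBlocks₁₂)ᵀ) i i < 0 := by
  intro H hne hpsd hdiag
  set d : (Fin n ⊕ Fin n) → ℝ :=
    Sum.elim (fun _ => 0) (fun i => H (Sum.inl i) (Sum.inl i) - H (Sum.inr i) (Sum.inr i))
    with hd
  have hd0 : ∀ j, 0 ≤ d j := by
    rintro (i | i)
    · simp [hd]
    · simp only [hd, Sum.elim_inr, sub_nonneg]
      exact hdiag i
  set D : Matrix (Fin n ⊕ Fin n) (Fin n ⊕ Fin n) ℝ := Matrix.diagonal d with hD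
  have hDpsd : D.PosSemidef := posSemidef_diagonal_iff.mpr hd0
  set H' := H + D with hH'
  have hpsd' : H'.PosSemidef := hpsd.add hDpsd
  have hne' : H' ≠ 0 := by
    intro h0
    apply hne
    have hHeq : H = -D := by
      rw [← sub_eq_zero]
      simpa [hH', sub_neg_eq_add] using h0
    have hd00 : ∀ j, d j = 0 := by
      intro j
      have h1 : 0 ≤ H j j := by
        exact hpsd.diag_nonneg
      have h2 : H j j = -(d j) := by
        rw [hHeq]; simp [hD, Matrix.diagonal]
      have := hd0 j
      linarith
    have : D = 0 := by
      ext i j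
      rw [hD]
      rcases eq_or_ne i j with rfl | hij
      · simp [hd00 i]
      · simp [Matrix.diagonal_apply_ne _ hij]
    rw [hHeq, this, neg_zero]
  have hdeq : ∀ i : Fin n, H' (Sum.inl i) (Sum.inl i) = H' (Sum.inr i) (Sum.inr i) := by
    intro i
    simp [hH', hD, Matrix.diagonal, hd]
  obtain ⟨i, hi⟩ := h H' hne' hpsd' hdeq
  refine ⟨i, ?_⟩
  have hb1 : H'.toBlocks₁₁ = H.toBlocks₁₁ := by
    ext i j; simp [hH', toBlocks₁₁, hD, Matrix.diagonal, hd]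
  have hb2 : H'.toBlocks₁₂ = H.toBlocks₁₂ := by
    ext i j; simp [hH', toBlocks₁₂, hD, Matrix.diagonal]
  rwa [hb1, hb2] at hi
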